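/- Let ((c,b),x) be in the graph of the argmin mapping S and assume the Slater constraint qualification holds at b. Then the Nürnberger Condition holds at ((c,b),x) if and only if M_{c,b}(x) = {D ⊂ I_b(x) : −(Qx+c) ∈ cone{a_i : i ∈ D} and |D| = n}; moreover, in this description the condition |D| = n can be replaced by the condition that {a_i : i ∈ D} is a basis of ℝ^n. -/

import Mathlib

open Matrix Set Topology Filter
open scoped ENNReal

namespace QPLip

variable {n m : ℕ}

/-- The quadratic objective function `(1/2) xᵀQx + cᵀx`. -/
noncomputable def obj (Q : Matrix (Fin n) (Fin n) ℝ) (c x : Fin n → ℝ) : ℝ :=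
  (1 / 2) * (x ⬝ᵥ Q.mulVec x) + c ⬝ᵥ x

/-- The feasible set `F(b) = {x : aᵢ'x ≤ bᵢ, i = 1,…,m}`. -/
def Feas (A : Matrix (Fin m) (Fin n) ℝ) (b : Fin m → ℝ) : Set (Fin n → ℝ) :=
  {x | ∀ i, A i ⬝ᵥ x ≤ b i}

/-- The argmin (optimal set) mapping `S(c,b)`. -/
noncomputable def argminSet (Q : Matrix (Fin n) (Fin n) ℝ) (A : Matrix (Fin m) (Fin n) ℝ)
    (c : Fin n → ℝ) (b : Fin m → ℝ) : Set (Fin n → ℝ) :=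
  {x | x ∈ Feas A b ∧ ∀ y ∈ Feas A b, obj Q c x ≤ obj Q c y}

/-- The active index set `I_b(x)`. -/
def activeIdx (A : Matrix (Fin m) (Fin n) ℝ) (b : Fin m → ℝ) (x : Fin n → ℝ) : Set (Fin m) :=
  {i | A i ⬝ᵥ x = b i}

/-- Conical convex hull of `{aᵢ : i ∈ D}` (equal to `{0}` when `D = ∅`). -/
def coneOf (A : Matrix (Fin m) (Fin n) ℝ) (D : Finset (Fin m)) : Set (Fin n → ℝ) :=
  {v | ∃ lam : Fin m → ℝ, (∀ i, 0 ≤ lam i) ∧ v = ∑ i ∈ D, lam i • A i}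

/-- The family `M_{c,b}(x)` of minimal KKT sets of indices at `((c,b),x)`. -/
def MinKKT (Q : Matrix (Fin n) (Fin n) ℝ) (A : Matrix (Fin m) (Fin n) ℝ)
    (c : Fin n → ℝ) (b : Fin m → ℝ) (x : Fin n → ℝ) : Set (Finset (Fin m)) :=
  {D | ↑D ⊆ activeIdx A b x ∧ -(Q.mulVec x + c) ∈ coneOf A D ∧
    ∀ D' : Finset (Fin m), D' ⊂ D → -(Q.mulVec x + c) ∉ coneOf A D'}

/-- The extended family `L_{c,b}(x)` of KKT subsets of indices. -/
def ExtKKT (Q : Matrix (Fin n) (Fin n) ℝ) (A : Matrix (Fin m) (Fin n) ℝ)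
    (c : Fin n → ℝ) (b : Fin m → ℝ) (x : Fin n → ℝ) : Set (Finset (Fin m)) :=
  {D | ↑D ⊆ activeIdx A b x ∧ LinearIndependent ℝ (fun i : D => A i.1) ∧
    -(Q.mulVec x + c) ∈ coneOf A D}

/-- Slater constraint qualification at `b`. -/
def Slater (A : Matrix (Fin m) (Fin n) ℝ) (b : Fin m → ℝ) : Prop :=
  ∃ y : Fin n → ℝ, ∀ i, A i ⬝ᵥ y < b i

/-- The Nürnberger condition at `((c,b),x)`. -/
def NCond (Q : Matrix (Fin n) (Fin n) ℝ) (A : Matrix (Fin m) (Fin n) ℝ)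
    (c : Fin n → ℝ) (b : Fin m → ℝ) (x : Fin n → ℝ) : Prop :=
  Slater A b ∧ ∀ D : Finset (Fin m), ↑D ⊆ activeIdx A b x →
    -(Q.mulVec x + c) ∈ coneOf A D → n ≤ D.card

/-- The submatrix `A_D` of `A` formed by the rows indexed by `D`. -/
def subA (A : Matrix (Fin m) (Fin n) ℝ) (D : Finset (Fin m)) : Matrix D (Fin n) ℝ :=
  Matrix.of fun i j => A i.1 j

/-- The KKT matrix `M_D = [[Q, A_Dᵀ],[A_D, 0]]`. -/
noncomputable def MD (Q : Matrix (Fin n) (Fin n) ℝ) (A : Matrix (Fin m) (Fin n) ℝ)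
    (D : Finset (Fin m)) : Matrix (Fin n ⊕ D) (Fin n ⊕ D) ℝ :=
  Matrix.fromBlocks Q (subA A D)ᵀ (subA A D) 0

/-- The feasible set of the subproblem `P_D`. -/
def FeasD (A : Matrix (Fin m) (Fin n) ℝ) (D : Finset (Fin m)) (β : D → ℝ) :
    Set (Fin n → ℝ) :=
  {x | ∀ i : D, A i.1 ⬝ᵥ x ≤ β i}

/-- The optimal set mapping `S_D(c,β)` of the subproblem `P_D(c,β)`. -/
noncomputable def argminD (Q : Matrix (Fin n) (Fin n) ℝ) (A : Matrix (Fin m) (Fin n) ℝ)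
    (D : Finset (Fin m)) (c : Fin n → ℝ) (β : D → ℝ) : Set (Fin n → ℝ) :=
  {x | x ∈ FeasD A D β ∧ ∀ y ∈ FeasD A D β, obj Q c x ≤ obj Q c y}

/-- Restriction `b_D` of the right-hand side `b` to the indices in `D`. -/
def restr (b : Fin m → ℝ) (D : Finset (Fin m)) : D → ℝ := fun i => b i.1

/-- `nrm` is a norm on `ℝⁿ`. -/
structure IsNorm (nrm : (Fin n → ℝ) → ℝ) : Prop where
  definite : ∀ x, nrm x = 0 → x = 0
  smul : ∀ (t : ℝ) (x : Fin n → ℝ), nrm (t • x) = |t| * nrm x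
  triangle : ∀ x y, nrm (x + y) ≤ nrm x + nrm y

/-- The dual norm `‖c‖_* = sup {|c'y| : ‖y‖ ≤ 1}`. -/
noncomputable def dualNrm (nrm : (Fin n → ℝ) → ℝ) (c : Fin n → ℝ) : ℝ :=
  sSup {r | ∃ y, nrm y ≤ 1 ∧ r = |c ⬝ᵥ y|}

/-- Distance (with respect to the norm `nrm`) from a point to a set, with `d(x,∅) = +∞`. -/
noncomputable def dSet (nrm : (Fin n → ℝ) → ℝ) (x : Fin n → ℝ) (S : Set (Fin n → ℝ)) :
    ℝ≥0∞ :=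
  ⨅ s ∈ S, ENNReal.ofReal (nrm (x - s))

/-- The distance `max {‖c₁-c₂‖_*, ‖β₁-β₂‖_∞}` in a parameter space `ℝⁿ × ℝ^ι`. -/
noncomputable def pDist (nrm : (Fin n → ℝ) → ℝ) {ι : Type} [Fintype ι]
    (p q : (Fin n → ℝ) × (ι → ℝ)) : ℝ :=
  max (dualNrm nrm (p.1 - q.1)) ‖p.2 - q.2‖

/-- The Aubin property of a set-valued mapping `G` at `(pbar, xbar)`, where the parameter
space carries the distance `pd` and `ℝⁿ` the norm `nrm`. -/
def AubinAt {P : Type*} [TopologicalSpace P] (nrm : (Fin n → ℝ) → ℝ) (pd : P → P → ℝ)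
    (G : P → Set (Fin n → ℝ)) (pbar : P) (xbar : Fin n → ℝ) : Prop :=
  ∃ κ : ℝ, 0 ≤ κ ∧ ∃ V ∈ 𝓝 pbar, ∃ U ∈ 𝓝 xbar,
    ∀ p1 ∈ V, ∀ p2 ∈ V, ∀ x2 ∈ G p2 ∩ U,
      dSet nrm x2 (G p1) ≤ ENNReal.ofReal (κ * pd p2 p1)

/-- The Lipschitz modulus of `G` at `(pbar, xbar)`: the infimum in `[0,+∞]` of all Lipschitz
constants `κ` in the definition of the Aubin property (`+∞` if the Aubin property fails). -/
noncomputable def lipMod {P : Type*} [TopologicalSpace P] (nrm : (Fin n → ℝ) → ℝ)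
    (pd : P → P → ℝ) (G : P → Set (Fin n → ℝ)) (pbar : P) (xbar : Fin n → ℝ) : ℝ≥0∞ :=
  ⨅ κ ∈ {κ : ℝ | 0 ≤ κ ∧ ∃ V ∈ 𝓝 pbar, ∃ U ∈ 𝓝 xbar,
    ∀ p1 ∈ V, ∀ p2 ∈ V, ∀ x2 ∈ G p2 ∩ U,
      dSet nrm x2 (G p1) ≤ ENNReal.ofReal (κ * pd p2 p1)}, ENNReal.ofReal κ

/-- Strong Lipschitz stability of `G` at `pbar`: single-valuedness in a neighborhood of
`pbar` together with Lipschitz continuity there. -/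
def StrongLipStable {P : Type*} [TopologicalSpace P] (nrm : (Fin n → ℝ) → ℝ)
    (pd : P → P → ℝ) (G : P → Set (Fin n → ℝ)) (pbar : P) : Prop :=
  ∃ V ∈ 𝓝 pbar, (∀ p ∈ V, ∃! x, x ∈ G p) ∧
    ∃ κ : ℝ, 0 ≤ κ ∧ ∀ p1 ∈ V, ∀ p2 ∈ V, ∀ x1 ∈ G p1, ∀ x2 ∈ G p2,
      nrm (x1 - x2) ≤ κ * pd p1 p2

/-- The matrix `(I_n | 0_{n×|D|})`. -/
noncomputable def projMat (n : ℕ) {m : ℕ} (D : Finset (Fin m)) :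
    Matrix (Fin n) (Fin n ⊕ D) ℝ :=
  Matrix.fromCols 1 0

/-- Operator norm of a matrix from `(ℝ^ι, ‖·‖_∞)` to `(ℝⁿ, nrm)`. -/
noncomputable def opNormInf (nrm : (Fin n → ℝ) → ℝ) {ι : Type} [Fintype ι]
    (B : Matrix (Fin n) ι ℝ) : ℝ :=
  sSup {r | ∃ v : ι → ℝ, ‖v‖ ≤ 1 ∧ r = nrm (B.mulVec v)}

/-- Operator norm of a matrix from `(ℝⁿ × ℝ^ι, max {‖·‖_*, ‖·‖_∞})` to `(ℝⁿ, nrm)`. -/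
noncomputable def opNormMixed (nrm : (Fin n → ℝ) → ℝ) {ι : Type} [Fintype ι]
    (B : Matrix (Fin n) (Fin n ⊕ ι) ℝ) : ℝ :=
  sSup {r | ∃ (α : Fin n → ℝ) (β : ι → ℝ), dualNrm nrm α ≤ 1 ∧ ‖β‖ ≤ 1 ∧
    r = nrm (B.mulVec (Sum.elim α β))}


/-- The matrix `A_Dᵀ (A_D A_Dᵀ)⁻¹`, which is the two-sided inverse of `A_D` whenever
`A_D` is square and invertible. -/
noncomputable def pinvA (A : Matrix (Fin m) (Fin n) ℝ) (D : Finset (Fin m)) :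
    Matrix (Fin n) D ℝ :=
  (subA A D)ᵀ * ((subA A D) * (subA A D)ᵀ)⁻¹

end QPLip

open QPLip


lemma coneOf_reduce {n m : ℕ} (A : Matrix (Fin m) (Fin n) ℝ) {v : Fin n → ℝ}
    {D : Finset (Fin m)} (hv : v ∈ coneOf A D)
    (hdep : ¬ LinearIndependent ℝ (fun i : D => A i.1)) :
    ∃ j ∈ D, v ∈ coneOf A (D.erase j) := by
  obtain ⟨lam, hlam, hsum⟩ := hv
  rw [Fintype.not_linearIndependent_iff] at hdep
  obtain ⟨g, hg0, j₀, hgj₀⟩ := hdep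
  -- extend g to Fin m
  set gext : Fin m → ℝ := fun i => if h : i ∈ D then g ⟨i, h⟩ else 0 with hgext
  have hsum0 : ∑ i ∈ D, gext i • A i = 0 := by
    rw [← Finset.sum_coe_sort D (fun i => gext i • A i)]
    convert hg0 using 2 with i
    simp [hgext, i.2]
  have hsupp : ∀ i, i ∉ D → gext i = 0 := by
    intro i hi; simp [hgext, hi]
  have hne : gext j₀.1 ≠ 0 := by simpa [hgext, j₀.2] using hgj₀
  -- wlog positive entry
  obtain ⟨g', hz, hsupp', j₁, hj₁D, hj₁⟩ :
      ∃ g' : Fin m → ℝ, (∑ i ∈ D, g' i • A i = 0) ∧ (∀ i, i ∉ D → g' i = 0) ∧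
        ∃ j₁ ∈ D, 0 < g' j₁ := by
    rcases hne.lt_or_gt with h | h
    · refine ⟨-gext, ?_, ?_, j₀.1, j₀.2, by simpa using h⟩
      · rw [show (∑ i ∈ D, (-gext) i • A i) = -∑ i ∈ D, gext i • A i by
            simp [neg_smul, Finset.sum_neg_distrib], hsum0, neg_zero]
      · intro i hi; simp [hsupp i hi]
    · exact ⟨gext, hsum0, hsupp, j₀.1, j₀.2, h⟩
  set P : Finset (Fin m) := D.filter (fun i => 0 < g' i) with hP
  have hPne : P.Nonempty := ⟨j₁, by simp [hP, hj₁D, hj₁]⟩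
  obtain ⟨j, hjP, hjmin⟩ := P.exists_min_image (fun i => lam i / g' i) hPne
  have hjD : j ∈ D := (Finset.mem_filter.1 hjP).1
  have hgj : 0 < g' j := (Finset.mem_filter.1 hjP).2
  set t : ℝ := lam j / g' j with ht
  have htnn : 0 ≤ t := div_nonneg (hlam j) hgj.le
  set lam' : Fin m → ℝ := fun i => lam i - t * g' i with hlam'
  have hnn : ∀ i, 0 ≤ lam' i := by
    intro i
    by_cases hiD : i ∈ D
    · by_cases hgi : 0 < g' i
      · have hiP : i ∈ P := Finset.mem_filter.2 ⟨hiD, hgi⟩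
        have h1 := hjmin i hiP
        have h2 : t * g' i ≤ lam i := by
          rw [le_div_iff₀ hgi] at h1; linarith
        simp only [hlam']; linarith
      · have h3 : t * g' i ≤ 0 :=
          mul_nonpos_of_nonneg_of_nonpos htnn (le_of_not_gt hgi)
        simp only [hlam']; linarith [hlam i]
    · simp [hlam', hsupp' i hiD, hlam i]
  have hlamj : lam' j = 0 := by
    simp only [hlam', ht]
    field_simp
    ring
  refine ⟨j, hjD, lam', hnn, ?_⟩
  have hsum' : ∑ i ∈ D, lam' i • A i = v := by
    have he : ∀ i, lam' i • A i = lam i • A i - t • (g' i • A i) := by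
      intro i; simp [hlam', sub_smul, smul_smul]
    rw [Finset.sum_congr rfl (fun i _ => he i), Finset.sum_sub_distrib,
      ← Finset.smul_sum, hz, smul_zero, sub_zero, hsum]
  rw [← hsum']
  exact (Finset.sum_erase D (show lam' j • A j = 0 by rw [hlamj, zero_smul])).symm

lemma exists_minimal_cone {n m : ℕ} (A : Matrix (Fin m) (Fin n) ℝ) (v : Fin n → ℝ) :
    ∀ D : Finset (Fin m), v ∈ coneOf A D →
      ∃ D' ⊆ D, v ∈ coneOf A D' ∧ ∀ E ⊂ D', v ∉ coneOf A E := by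
  intro D
  induction D using Finset.strongInduction with
  | _ D ih =>
    intro hv
    by_cases h : ∀ E ⊂ D, v ∉ coneOf A E
    · exact ⟨D, subset_rfl, hv, h⟩
    · push_neg at h
      obtain ⟨E, hE, hvE⟩ := h
      obtain ⟨D', h1, h2, h3⟩ := ih E hE hvE
      exact ⟨D', h1.trans hE.subset, h2, h3⟩

/-- under SCQ at `b`, the Nürnberger condition holds at `((c,b),x) ∈ gph S` iff
`M_{c,b}(x)` consists exactly of the subsets `D` of active indices with
`-(Qx+c) ∈ cone{aᵢ : i ∈ D}` and `|D| = n`; moreover `|D| = n` can be replaced by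
`{aᵢ : i ∈ D}` being a basis of `ℝⁿ`. -/
theorem statement1 {n m : ℕ} (hn : 0 < n) (hm : 0 < m)
    (Q : Matrix (Fin n) (Fin n) ℝ) (hQ : Q.PosSemidef)
    (A : Matrix (Fin m) (Fin n) ℝ) (c : Fin n → ℝ) (b : Fin m → ℝ) (x : Fin n → ℝ)
    (hx : x ∈ argminSet Q A c b) (hSl : Slater A b) :
    (NCond Q A c b x ↔
      MinKKT Q A c b x =
        {D : Finset (Fin m) | ↑D ⊆ activeIdx A b x ∧
          -(Q.mulVec x + c) ∈ coneOf A D ∧ D.card = n}) ∧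
    (NCond Q A c b x ↔
      MinKKT Q A c b x =
        {D : Finset (Fin m) | ↑D ⊆ activeIdx A b x ∧
          -(Q.mulVec x + c) ∈ coneOf A D ∧
          LinearIndependent ℝ (fun i : D => A i.1) ∧
          Submodule.span ℝ (Set.range fun i : D => A i.1) = ⊤}) := by
  
  set v := -(Q.mulVec x + c) with hvdef
  have hcardle : ∀ D : Finset (Fin m), LinearIndependent ℝ (fun i : D => A i.1) →
      D.card ≤ n := by
    intro D hli
    have h := hli.fintype_card_le_finrank
    rwa [Fintype.card_coe, Module.finrank_fin_fun] at h
  have hmin_li : ∀ D ∈ MinKKT Q A c b x, LinearIndependent ℝ (fun i : D => A i.1) := by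
    intro D hD
    by_contra hdep
    obtain ⟨j, hjD, hj⟩ := coneOf_reduce A hD.2.1 hdep
    exact hD.2.2 (D.erase j) (Finset.erase_ssubset hjD) hj
  have hspan_of_card : ∀ D : Finset (Fin m), LinearIndependent ℝ (fun i : D => A i.1) →
      D.card = n → Submodule.span ℝ (Set.range fun i : D => A i.1) = ⊤ := by
    intro D hli hc
    exact hli.span_eq_top_of_card_eq_finrank'
      (by rw [Fintype.card_coe, Module.finrank_fin_fun, hc])
  have hcard_of_span : ∀ D : Finset (Fin m), LinearIndependent ℝ (fun i : D => A i.1) →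
      Submodule.span ℝ (Set.range fun i : D => A i.1) = ⊤ → D.card = n := by
    intro D hli hsp
    have B := Module.Basis.mk hli hsp.ge
    have h := Module.finrank_eq_card_basis B
    rwa [Module.finrank_fin_fun, Fintype.card_coe, eq_comm] at h
  have hmem_of_card : ∀ hNC : (∀ D : Finset (Fin m), ↑D ⊆ activeIdx A b x →
      v ∈ coneOf A D → n ≤ D.card), ∀ D : Finset (Fin m), ↑D ⊆ activeIdx A b x →
      v ∈ coneOf A D → D.card = n → D ∈ MinKKT Q A c b x := by
    intro hNC D hact hcone hcard
    refine ⟨hact, hcone, ?_⟩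
    intro E hE hvE
    have h1 := hNC E ((Finset.coe_subset.2 hE.subset).trans hact) hvE
    have h2 := Finset.card_lt_card hE
    omega
  have hNC_of : ∀ (cond : Finset (Fin m) → Prop),
      (∀ D, D ∈ MinKKT Q A c b x → cond D → D.card = n) →
      MinKKT Q A c b x = {D : Finset (Fin m) | ↑D ⊆ activeIdx A b x ∧
        v ∈ coneOf A D ∧ cond D} → NCond Q A c b x := by
    intro cond hcn heq
    refine ⟨hSl, ?_⟩
    intro D hact hcone
    obtain ⟨D', hsub, h2, h3⟩ := exists_minimal_cone A v D hcone
    have hmem : D' ∈ MinKKT Q A c b x :=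
      ⟨(Finset.coe_subset.2 hsub).trans hact, h2, h3⟩
    have hc := hcn D' hmem (by rw [heq] at hmem; exact hmem.2.2)
    calc n = D'.card := hc.symm
      _ ≤ D.card := Finset.card_le_card hsub
  constructor
  · constructor
    · rintro ⟨-, hNC⟩
      ext D
      simp only [MinKKT, Set.mem_setOf_eq]
      constructor
      · rintro ⟨hact, hcone, hminl⟩
        exact ⟨hact, hcone,
          le_antisymm (hcardle D (hmin_li D ⟨hact, hcone, hminl⟩)) (hNC D hact hcone)⟩
      · rintro ⟨hact, hcone, hcard⟩
        exact hmem_of_card hNC D hact hcone hcard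
    · intro heq
      exact hNC_of (fun D => D.card = n) (fun D _ h => h) heq
  · constructor
    · rintro ⟨-, hNC⟩
      ext D
      simp only [MinKKT, Set.mem_setOf_eq]
      constructor
      · rintro ⟨hact, hcone, hminl⟩
        have hli := hmin_li D ⟨hact, hcone, hminl⟩
        have hcard : D.card = n :=
          le_antisymm (hcardle D hli) (hNC D hact hcone)
        exact ⟨hact, hcone, hli, hspan_of_card D hli hcard⟩
      · rintro ⟨hact, hcone, hli, hsp⟩
        exact hmem_of_card hNC D hact hcone (hcard_of_span D hli hsp)
    · intro heq
      exact hNC_of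
        (fun D => LinearIndependent ℝ (fun i : D => A i.1) ∧
          Submodule.span ℝ (Set.range fun i : D => A i.1) = ⊤)
        (fun D _ h => hcard_of_span D h.1 h.2) heq
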